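/- For every α ∈ (0,1), setting δ = 1 − α, there exists a strictly increasing sequence (N_j)_{j≥1} of positive integers such that the set Ẽ = {x ∈ 𝕋 : sup_j N_j^{1+δ}·dist(x, (2/N_j)ℤ) < ∞} has Hausdorff dimension at least α. -/

import Mathlib

open MeasureTheory Filter Metric Set

noncomputable section

instance : Fact ((0:ℝ) < 2) := ⟨two_pos⟩

/-- The circle `𝕋 = ℝ/2ℤ`. -/
abbrev Circle2 := AddCircle (2 : ℝ)

/-- Integral of `f` against a complex measure, defined via the Jordan decompositions of the
real and imaginary parts. -/
def cmIntegral (μ : ComplexMeasure Circle2) (f : Circle2 → ℂ) : ℂ :=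
  ((∫ x, f x ∂μ.re.toJordanDecomposition.posPart) -
      ∫ x, f x ∂μ.re.toJordanDecomposition.negPart) +
    Complex.I * ((∫ x, f x ∂μ.im.toJordanDecomposition.posPart) -
      ∫ x, f x ∂μ.im.toJordanDecomposition.negPart)

/-- The Fourier coefficient `μ̂(n) = (1/2) ∫_𝕋 e^{iπnx} dμ(x)`; here `fourier n x = exp (iπnx)`
on `AddCircle 2`. -/
def cmFourierCoeff (μ : ComplexMeasure Circle2) (n : ℤ) : ℂ :=
  (1 / 2 : ℂ) * cmIntegral μ (fun x => fourier n x)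

/-- The support of the Fourier transform of `μ`. -/
def fourierSupport (μ : ComplexMeasure Circle2) : Set ℤ := {n | cmFourierCoeff μ n ≠ 0}

/-- A positive measure with the same null sets as the total variation `|μ|`. -/
def cmVariation (μ : ComplexMeasure Circle2) : Measure Circle2 :=
  μ.re.totalVariation + μ.im.totalVariation

/-- `μ` is concentrated on `E`, i.e. `|μ|(𝕋 ∖ E) = 0`. -/
def ConcentratedOn (μ : ComplexMeasure Circle2) (E : Set Circle2) : Prop :=
  cmVariation μ Eᶜ = 0

/-- `Λ ⊆ ℤ` is a Rajchman set. -/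
def IsRajchman (Λ : Set ℤ) : Prop :=
  ∀ μ : ComplexMeasure Circle2,
    Tendsto (cmFourierCoeff μ) (Filter.cofinite ⊓ Filter.principal Λᶜ) (nhds 0) →
    Tendsto (cmFourierCoeff μ) (Filter.cofinite ⊓ Filter.principal Λ) (nhds 0)

/-- `Λ ⊆ ℤ` is a Riesz set. -/
def IsRiesz (Λ : Set ℤ) : Prop :=
  ∀ μ : ComplexMeasure Circle2, fourierSupport μ ⊆ Λ →
    μ ≪ᵥ (volume : Measure Circle2).toENNRealVectorMeasure

/-- `E ⊆ 𝕋` is a parisian set. -/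
def IsParisian (E : Set Circle2) : Prop :=
  ∀ μ : ComplexMeasure Circle2, ConcentratedOn μ E →
    ¬ μ ≪ᵥ (volume : Measure Circle2).toENNRealVectorMeasure →
    ¬ IsRajchman (fourierSupport μ)

/-- `Ω((n_j)) = {∑ ε_j n_j : ε_j ∈ {-1,0,1}, finitely many nonzero}`. -/
def Omega (n : ℕ → ℤ) : Set ℤ :=
  {k | ∃ (F : Finset ℕ) (ε : ℕ → ℤ),
    (∀ j, ε j = -1 ∨ ε j = 0 ∨ ε j = 1) ∧ k = ∑ j ∈ F, ε j * n j}

/-- The image of `(2/N)ℤ` in `𝕋`. -/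
def grid (N : ℕ) : Set Circle2 := Set.range fun k : ℤ => ((2 * k / N : ℝ) : Circle2)

/-- `A(N,δ)`: the points of `𝕋` within distance `1/(2N^{1+δ})` of `(2/N)ℤ`. -/
def nbhdGrid (N : ℕ) (δ : ℝ) : Set Circle2 :=
  {x | Metric.infDist x (grid N) ≤ 1 / (2 * (N : ℝ) ^ ((1 : ℝ) + δ))}

/-- `Ẽ = {x ∈ 𝕋 : sup_j N_j^{1+δ}·dist(x, (2/N_j)ℤ) < ∞}`. -/
def Etilde (N : ℕ → ℕ) (δ : ℝ) : Set Circle2 :=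
  {x | ∃ C : ℝ, ∀ j, (N j : ℝ) ^ ((1 : ℝ) + δ) * Metric.infDist x (grid (N j)) ≤ C}

/-- The total variation norm `‖μ‖` of a complex measure, as the supremum of
`∑ |μ(B i)|` over finite disjoint families of measurable sets. -/
def cmNorm (μ : ComplexMeasure Circle2) : ℝ :=
  sSup {r : ℝ | ∃ (n : ℕ) (B : Fin n → Set Circle2), (∀ i, MeasurableSet (B i)) ∧
    (∀ i j, i ≠ j → Disjoint (B i) (B j)) ∧ r = ∑ i, ‖μ (B i)‖}

/-- Fourier coefficient of a positive measure. -/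
def posFourierCoeff (μ : Measure Circle2) (n : ℤ) : ℂ :=
  (1 / 2 : ℂ) * ∫ x, fourier n x ∂μ


namespace EtProof
open scoped NNReal ENNReal

variable (α : ℝ)

/-- end of gap after a block ending at position n -/
def gf (n : ℕ) : ℕ := ⌈(2 - α) * ((n : ℝ) + 1)⌉₊

def n0 : ℕ := ⌈4 / (1 - α)^2⌉₊

def nseq : ℕ → ℕ
  | 0 => n0 α
  | j+1 => nseq j + ⌈((gf α (nseq j) : ℝ) + 4) / (1 - α)^2⌉₊ + 1

def pseq : ℕ → ℕ
  | 0 => n0 α - 1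
  | j+1 => pseq j + (nseq α (j+1) - gf α (nseq α j))

def σf (p : ℕ) : ℕ :=
  p + 1 + ∑ j ∈ Finset.range p, if pseq α j < p then gf α (nseq α j) - nseq α j else 0

def wf (p : ℕ) : ℝ := ((2:ℝ)^(σf α p))⁻¹

def ff : ℕ → ℕ → ℝ
  | 0, _ => 0
  | (Q+1), n => ff Q (n/2) + (n % 2 : ℕ) * wf α (Q+1)

def Hf (Q : ℕ) (t : ℝ) : ℝ := ff α Q ⌊(2:ℝ)^Q * t⌋₊

def hf (t : ℝ) : ℝ := ⨆ Q, Hf α Q t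

def Nseq (j : ℕ) : ℕ := 2^(nseq α j + 1)

def Gsum (j : ℕ) : ℕ := ∑ k ∈ Finset.range j, (gf α (nseq α k) - nseq α k)

variable {α}
variable (hα : α ∈ Set.Ioo (0:ℝ) 1)
include hα

lemma gamma_pos : 0 < (1 - α)^2 := by
  have h2 := hα.2
  have : (0:ℝ) < 1 - α := by linarith
  positivity

lemma gamma_le_one : (1 - α)^2 ≤ 1 := by
  have h1 := hα.1; have h2 := hα.2; nlinarith

lemma gf_ge (n : ℕ) : n + 2 ≤ gf α n := by
  have h2 := hα.2
  have : ((n:ℝ) + 1) < (2 - α) * ((n:ℝ)+1) := by nlinarith [Nat.cast_nonneg (α := ℝ) n]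
  have : ((n + 1 : ℕ) : ℝ) < (2 - α) * ((n:ℝ)+1) := by push_cast; linarith
  have h := Nat.lt_ceil.2 this
  unfold gf
  omega

lemma gf_le (n : ℕ) : (gf α n : ℝ) ≤ (2 - α) * ((n:ℝ) + 1) + 1 := by
  have h2 := hα.2
  have hnn : 0 ≤ (2 - α) * ((n:ℝ)+1) := by nlinarith [Nat.cast_nonneg (α := ℝ) n]
  exact le_of_lt (Nat.ceil_lt_add_one hnn)

lemma n0_ge : 4 ≤ n0 α := by
  have hg := gamma_pos hα
  have hle := gamma_le_one hα
  have : (4:ℝ) ≤ 4 / (1-α)^2 := by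
    rw [le_div_iff₀ hg]; nlinarith
  have : ((4:ℕ):ℝ) ≤ 4 / (1-α)^2 := by push_cast; linarith
  have h := Nat.ceil_mono this
  simpa [n0, Nat.ceil_natCast] using h

lemma nseq_succ_ge (j : ℕ) : gf α (nseq α j) + 5 + nseq α j ≤ nseq α (j+1) := by
  have hg := gamma_pos hα
  have hle := gamma_le_one hα
  set g := gf α (nseq α j)
  have h1 : ((g:ℝ) + 4) ≤ ((g:ℝ) + 4) / (1-α)^2 := by
    rw [le_div_iff₀ hg]; nlinarith [Nat.cast_nonneg (α := ℝ) g]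
  have h2 : ((g + 4 : ℕ) : ℝ) ≤ ((g:ℝ) + 4) / (1-α)^2 := by push_cast; linarith
  have h3 := Nat.ceil_mono h2
  rw [Nat.ceil_natCast] at h3
  show _ ≤ nseq α j + ⌈((g:ℝ) + 4) / (1-α)^2⌉₊ + 1
  omega

lemma nseq_real_ge (j : ℕ) : ((gf α (nseq α j) : ℝ) + 3) / (1-α)^2 ≤ nseq α (j+1) := by
  have hg := gamma_pos hα
  have h1 : ((gf α (nseq α j):ℝ) + 3)/(1-α)^2 ≤ ((gf α (nseq α j):ℝ) + 4)/(1-α)^2 := by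
    gcongr
    linarith
  have h2 : ((gf α (nseq α j):ℝ) + 4)/(1-α)^2 ≤ ⌈((gf α (nseq α j):ℝ) + 4)/(1-α)^2⌉₊ :=
    Nat.le_ceil _
  have : (nseq α (j+1) : ℝ) = nseq α j + ⌈((gf α (nseq α j):ℝ) + 4)/(1-α)^2⌉₊ + 1 := by
    show ((nseq α j + _ + 1 : ℕ) : ℝ) = _
    push_cast; ring
  rw [this]
  have : (0:ℝ) ≤ nseq α j := Nat.cast_nonneg _
  linarith


lemma pseq_zero_add_one : pseq α 0 + 1 = n0 α := by
  have := n0_ge hα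
  show n0 α - 1 + 1 = n0 α
  omega

omit hα in
lemma pseq_succ (j : ℕ) :
    pseq α (j+1) = pseq α j + (nseq α (j+1) - gf α (nseq α j)) := rfl

lemma pseq_succ_ge (j : ℕ) : pseq α j + 5 ≤ pseq α (j+1) := by
  have h := nseq_succ_ge hα j
  rw [pseq_succ]
  omega

lemma pseq_strictMono : StrictMono (pseq α) :=
  strictMono_nat_of_lt_succ (fun j => by have := pseq_succ_ge hα j; omega)

lemma pseq_ge (j : ℕ) : j + 3 ≤ pseq α j := by
  induction j with
  | zero => have := n0_ge hα; show _ ≤ n0 α - 1; omega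
  | succ j ih => have := pseq_succ_ge hα j; omega

/-- the invariant -/
lemma invariant : ∀ j, α * ((gf α (nseq α j) : ℝ) + 1) ≤ (pseq α j : ℝ) + 1 := by
  intro j
  have h1 := hα.1
  have h2 := hα.2
  have key : ∀ n m : ℕ, ((gf α n : ℝ) + 3) / (1-α)^2 ≤ (m : ℝ) →
      α * ((gf α m : ℝ) + 1) ≤ (m : ℝ) - (gf α n : ℝ) := by
    intro n m hm
    have hg := gamma_pos hα
    have hle1 := gf_le hα m
    have hmm : (gf α n : ℝ) + 3 ≤ (1-α)^2 * m := by
      rw [div_le_iff₀ hg] at hm; linarith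
    have : α * ((gf α m : ℝ) + 1) ≤ α * ((2-α) * ((m:ℝ)+1) + 2) := by
      have : (0:ℝ) ≤ α := le_of_lt h1
      nlinarith
    have expand : α * ((2-α) * ((m:ℝ)+1) + 2) = (1 - (1-α)^2) * ((m:ℝ)+1) + 2*α := by ring
    nlinarith
  cases j with
  | zero =>
    -- p 0 + 1 = n0, need α (g(n0)+1) ≤ n0
    rw [show ((pseq α 0 : ℝ) + 1) = (n0 α : ℝ) by
      rw [← pseq_zero_add_one hα]; push_cast; ring]
    have hg := gamma_pos hα
    have hn00 : nseq α 0 = n0 α := rfl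
    have hle1 := gf_le hα (nseq α 0)
    have hn0 : (4:ℝ)/(1-α)^2 ≤ (nseq α 0 : ℝ) := by rw [hn00]; exact Nat.le_ceil _
    have hmm : (4:ℝ) ≤ (1-α)^2 * (nseq α 0) := by
      rw [div_le_iff₀ hg] at hn0; linarith
    have hαnn : (0:ℝ) ≤ α := le_of_lt h1
    have hcast : (0:ℝ) ≤ (nseq α 0 : ℝ) := Nat.cast_nonneg _
    rw [← hn00]
    nlinarith
  | succ j =>
    have hge := nseq_succ_ge hα j
    have hreal := nseq_real_ge hα j
    have hk := key (nseq α j) (nseq α (j+1)) hreal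
    have hsub : ((nseq α (j+1) - gf α (nseq α j) : ℕ) : ℝ)
        = (nseq α (j+1) : ℝ) - (gf α (nseq α j) : ℝ) := by
      rw [Nat.cast_sub (by omega)]
    rw [pseq_succ]
    push_cast [Nat.cast_sub (show gf α (nseq α j) ≤ nseq α (j+1) by omega)]
    have hp : (0:ℝ) ≤ (pseq α j : ℝ) := Nat.cast_nonneg _
    -- goal : α * (gf (nseq (j+1)) + 1) ≤ pseq j + (nseq (j+1) - gf (nseq j)) + 1
    linarith


omit hα in
lemma Gsum_succ (j : ℕ) : Gsum α (j+1) = Gsum α j + (gf α (nseq α j) - nseq α j) :=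
  Finset.sum_range_succ _ _

lemma nseq_eq (j : ℕ) : nseq α j = pseq α j + 1 + Gsum α j := by
  induction j with
  | zero =>
    have := n0_ge hα
    show n0 α = (n0 α - 1) + 1 + 0
    omega
  | succ j ih =>
    have h1 := nseq_succ_ge hα j
    have h2 := gf_ge hα (nseq α j)
    rw [Gsum_succ, pseq_succ]
    omega

lemma sumgen {p j : ℕ} (h : ∀ k, pseq α k < p ↔ k < j) :
    σf α p = p + 1 + Gsum α j := by
  have hjp : j ≤ p := by
    rcases Nat.eq_zero_or_pos j with h0 | h0
    · omega
    · have : pseq α (j-1) < p := (h (j-1)).2 (by omega)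
      have := pseq_ge hα (j-1)
      omega
  unfold σf
  congr 1
  have step1 : (∑ k ∈ Finset.range p, if pseq α k < p then gf α (nseq α k) - nseq α k else 0)
      = ∑ k ∈ Finset.range p, if k < j then gf α (nseq α k) - nseq α k else 0 := by
    apply Finset.sum_congr rfl
    intro k _
    exact if_congr (h k) rfl rfl
  rw [step1, Finset.sum_ite, Finset.sum_const, smul_zero, add_zero]
  show _ = Gsum α j
  unfold Gsum
  apply Finset.sum_congr
  · ext k
    simp only [Finset.mem_filter, Finset.mem_range]
    omega
  · intro _ _; rfl

lemma σf_pseq (j : ℕ) : σf α (pseq α j) = nseq α j := by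
  rw [sumgen hα (j := j) (fun k => by
    constructor
    · intro hk
      by_contra hc
      have : pseq α j ≤ pseq α k := (pseq_strictMono hα).le_iff_le.2 (by omega)
      omega
    · intro hk
      exact pseq_strictMono hα (by omega))]
  rw [nseq_eq hα j]

lemma σf_pseq_succ (j : ℕ) : σf α (pseq α j + 1) = gf α (nseq α j) + 1 := by
  rw [sumgen hα (j := j+1) (fun k => by
    constructor
    · intro hk
      by_contra hc
      have hle : pseq α (j+1) ≤ pseq α k := (pseq_strictMono hα).le_iff_le.2 (by omega)
      have := pseq_succ_ge hα j
      omega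
    · intro hk
      have : pseq α k ≤ pseq α j := (pseq_strictMono hα).le_iff_le.2 (by omega)
      omega)]
  rw [Gsum_succ]
  have h1 := nseq_eq hα j
  have h2 := gf_ge hα (nseq α j)
  omega

lemma σf_succ_of_ne {p : ℕ} (h : ∀ j, pseq α j ≠ p) : σf α (p+1) = σf α p + 1 := by
  unfold σf
  rw [Finset.sum_range_succ]
  have hlast : (if pseq α p < p + 1 then gf α (nseq α p) - nseq α p else 0) = 0 := by
    have h1 := pseq_ge hα p
    have h2 := h p
    rw [if_neg (by omega)]
  rw [hlast, add_zero]
  have : (∑ k ∈ Finset.range p, if pseq α k < p + 1 then gf α (nseq α k) - nseq α k else 0)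
      = ∑ k ∈ Finset.range p, if pseq α k < p then gf α (nseq α k) - nseq α k else 0 := by
    apply Finset.sum_congr rfl
    intro k _
    have := h k
    by_cases hk : pseq α k < p
    · rw [if_pos (by omega), if_pos hk]
    · rw [if_neg (by omega), if_neg hk]
  omega

omit hα in
lemma σf_zero : σf α 0 = 1 := by simp [σf]

lemma σf_succ_ge (p : ℕ) : σf α p + 1 ≤ σf α (p+1) := by
  by_cases h : ∃ j, pseq α j = p
  · obtain ⟨j, hj⟩ := h
    subst hj
    rw [σf_pseq hα, σf_pseq_succ hα]
    have := gf_ge hα (nseq α j)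
    omega
  · push_neg at h
    rw [σf_succ_of_ne hα h]

lemma σf_mono : StrictMono (σf α) :=
  strictMono_nat_of_lt_succ (fun p => by have := σf_succ_ge hα p; omega)

lemma σf_ge (p : ℕ) : p + 1 ≤ σf α p := by
  induction p with
  | zero => rw [σf_zero]
  | succ p ih => have := σf_succ_ge hα p; omega

lemma σf_add_le (p k : ℕ) : σf α p + k ≤ σf α (p + k) := by
  induction k with
  | zero => simp
  | succ k ih =>
    have h2 := σf_succ_ge hα (p+k)
    have e : p + (k+1) = (p+k)+1 := rfl
    rw [e]
    omega

/-- density condition -/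
lemma σf_density (P : ℕ) : α * (σf α P : ℝ) ≤ (P : ℝ) + α := by
  induction P with
  | zero =>
    rw [σf_zero]
    simp
  | succ P ih =>
    have h1 := hα.1
    have h2 := hα.2
    by_cases h : ∃ j, pseq α j = P
    · obtain ⟨j, hj⟩ := h
      subst hj
      rw [σf_pseq_succ hα]
      have hinv := invariant hα j
      have : ((gf α (nseq α j) + 1 : ℕ) : ℝ) = (gf α (nseq α j) : ℝ) + 1 := by push_cast; ring
      rw [this]
      have : ((pseq α j + 1 : ℕ) : ℝ) = (pseq α j : ℝ) + 1 := by push_cast; ring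
      rw [this]
      linarith
    · push_neg at h
      rw [σf_succ_of_ne hα h]
      push_cast
      nlinarith [Nat.cast_nonneg (α := ℝ) P]


omit hα in
lemma wf_pos (p : ℕ) : 0 < wf α p := by
  unfold wf; positivity

omit hα in
lemma wf_zero : wf α 0 = 1/2 := by
  unfold wf; rw [σf_zero]; norm_num

lemma wf_two_mul_succ_le (p : ℕ) : 2 * wf α (p+1) ≤ wf α p := by
  unfold wf
  have h := σf_succ_ge hα p
  have h2 : (2:ℝ)^(σf α p) * 2 ≤ (2:ℝ)^(σf α (p+1)) := by
    calc (2:ℝ)^(σf α p) * 2 = 2^(σf α p + 1) := by rw [pow_succ]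
    _ ≤ 2^(σf α (p+1)) := by
        apply pow_le_pow_right₀ one_le_two h
  have hp1 : (0:ℝ) < (2:ℝ)^(σf α p) := by positivity
  have hp2 : (0:ℝ) < (2:ℝ)^(σf α (p+1)) := by positivity
  rw [mul_inv_le_iff₀ hp2, inv_mul_eq_div, le_div_iff₀ hp1]
  linarith

lemma wf_le_wf (p q : ℕ) (h : p ≤ q) : wf α q ≤ wf α p := by
  unfold wf
  have := (σf_mono hα).le_iff_le.2 h
  apply inv_anti₀ (by positivity)
  exact pow_le_pow_right₀ one_le_two this

omit hα in
lemma ff_nonneg (Q n : ℕ) : 0 ≤ ff α Q n := by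
  induction Q generalizing n with
  | zero => simp [ff]
  | succ Q ih =>
    have h1 := ih (n/2)
    have h2 := (wf_pos (α := α) (Q+1)).le
    have h3 : (0:ℝ) ≤ ((n % 2 : ℕ):ℝ) := Nat.cast_nonneg _
    have h4 := mul_nonneg h3 h2
    simp only [ff]
    linarith

lemma ff_le (Q n : ℕ) : ff α Q n ≤ 1/2 - wf α Q := by
  induction Q generalizing n with
  | zero => simp [ff, wf_zero]
  | succ Q ih =>
    have h1 := ih (n/2)
    have h2 := wf_two_mul_succ_le hα Q
    have h3 : ((n % 2 : ℕ) : ℝ) ≤ 1 := by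
      have : n % 2 ≤ 1 := by omega
      exact_mod_cast this
    have h4 := (wf_pos (α := α) (Q+1)).le
    simp only [ff]
    nlinarith

/-- digit lemma -/
lemma ff_gap (Q : ℕ) : ∀ a b : ℕ, a ≤ b → b < 2^Q →
    ff α Q a ≤ ff α Q b ∧ (a < b → ff α Q a + wf α Q ≤ ff α Q b) := by
  induction Q with
  | zero =>
    intro a b hab hb
    have : b = 0 := by omega
    subst this
    have : a = 0 := by omega
    subst this
    exact ⟨le_rfl, by omega⟩
  | succ Q ih =>
    intro a b hab hb
    have hdiv : a / 2 ≤ b / 2 := Nat.div_le_div_right hab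
    have hb2 : b / 2 < 2^Q := by
      have : (2:ℕ)^(Q+1) = 2^Q * 2 := by rw [pow_succ]
      omega
    obtain ⟨hmono, hgap⟩ := ih (a/2) (b/2) hdiv hb2
    have hw := wf_two_mul_succ_le hα Q
    have hwp := (wf_pos (α := α) (Q+1)).le
    rcases Nat.lt_or_ge (a/2) (b/2) with hlt | hge
    · have hg := hgap hlt
      constructor
      · simp only [ff]
        have ha : ((a % 2 : ℕ) : ℝ) ≤ 1 := by
          have : a % 2 ≤ 1 := by omega
          exact_mod_cast this
        have hbm : (0:ℝ) ≤ ((b % 2 : ℕ) : ℝ) := Nat.cast_nonneg _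
        nlinarith
      · intro _
        simp only [ff]
        have ha : ((a % 2 : ℕ) : ℝ) ≤ 1 := by
          have : a % 2 ≤ 1 := by omega
          exact_mod_cast this
        have hbm : (0:ℝ) ≤ ((b % 2 : ℕ) : ℝ) := Nat.cast_nonneg _
        nlinarith
    · have heq : a / 2 = b / 2 := le_antisymm hdiv hge
      have hmod : a % 2 ≤ b % 2 := by omega
      constructor
      · simp only [ff, heq]
        have : ((a % 2 : ℕ) : ℝ) ≤ ((b % 2 : ℕ) : ℝ) := by exact_mod_cast hmod
        nlinarith
      · intro hlt
        have hmodlt : a % 2 + 1 ≤ b % 2 := by omega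
        simp only [ff, heq]
        have : ((a % 2 : ℕ) : ℝ) + 1 ≤ ((b % 2 : ℕ) : ℝ) := by exact_mod_cast hmodlt
        nlinarith

omit hα in
lemma ff_shift (Q k : ℕ) : ff α (Q+1) (2*k) = ff α Q k := by
  simp [ff, Nat.mul_div_cancel_left, Nat.mul_mod_right]

omit hα in
lemma ff_dyadic (P Q m : ℕ) : ff α (P+Q) (m * 2^Q) = ff α P m := by
  induction Q with
  | zero => simp
  | succ Q ih =>
    have e1 : P + (Q+1) = (P + Q) + 1 := rfl
    have e2 : m * 2^(Q+1) = 2 * (m * 2^Q) := by ring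
    rw [e1, e2, ff_shift, ih]

lemma ff_int (Q n : ℕ) : ∃ k : ℕ, ff α Q n = (k:ℝ) / 2^(σf α Q) := by
  induction Q generalizing n with
  | zero => exact ⟨0, by simp [ff]⟩
  | succ Q ih =>
    obtain ⟨k, hk⟩ := ih (n/2)
    refine ⟨k * 2^(σf α (Q+1) - σf α Q) + n % 2, ?_⟩
    have hσ := σf_succ_ge hα Q
    have hpow : (2:ℝ)^(σf α (Q+1)) = 2^(σf α Q) * 2^(σf α (Q+1) - σf α Q) := by
      rw [← pow_add]
      congr 1
      omega
    simp only [ff, hk, wf]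
    rw [hpow]
    push_cast
    have h1 : ((2:ℝ)^(σf α Q)) ≠ 0 := by positivity
    have h2 : ((2:ℝ)^(σf α (Q+1) - σf α Q)) ≠ 0 := by positivity
    field_simp


omit hα in
lemma floor_half (Q : ℕ) (t : ℝ) : ⌊(2:ℝ)^(Q+1) * t⌋₊ / 2 = ⌊(2:ℝ)^Q * t⌋₊ := by
  rw [← Nat.floor_div_natCast ((2:ℝ)^(Q+1) * t) 2]
  congr 1
  rw [pow_succ]
  push_cast
  ring

omit hα in
lemma Hf_succ (Q : ℕ) (t : ℝ) :
    Hf α (Q+1) t = Hf α Q t + ((⌊(2:ℝ)^(Q+1) * t⌋₊ % 2 : ℕ) : ℝ) * wf α (Q+1) := by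
  unfold Hf
  conv_lhs => rw [ff]
  rw [floor_half]

omit hα in
lemma Hf_succ_lb (Q : ℕ) (t : ℝ) : Hf α Q t ≤ Hf α (Q+1) t := by
  rw [Hf_succ]
  have h2 := (wf_pos (α := α) (Q+1)).le
  have h3 : (0:ℝ) ≤ ((⌊(2:ℝ)^(Q+1) * t⌋₊ % 2 : ℕ):ℝ) := Nat.cast_nonneg _
  nlinarith

omit hα in
lemma Hf_succ_ub (Q : ℕ) (t : ℝ) : Hf α (Q+1) t ≤ Hf α Q t + wf α (Q+1) := by
  rw [Hf_succ]
  have h2 := (wf_pos (α := α) (Q+1)).le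
  have h3 : ((⌊(2:ℝ)^(Q+1) * t⌋₊ % 2 : ℕ):ℝ) ≤ 1 := by
    have : ⌊(2:ℝ)^(Q+1) * t⌋₊ % 2 ≤ 1 := by omega
    exact_mod_cast this
  nlinarith

omit hα in
lemma Hf_mono_Q {Q Q' : ℕ} (h : Q ≤ Q') (t : ℝ) : Hf α Q t ≤ Hf α Q' t := by
  induction Q' with
  | zero => have : Q = 0 := by omega
            subst this; exact le_rfl
  | succ Q' ih =>
    rcases Nat.lt_or_ge Q (Q'+1) with hlt | hge
    · exact (ih (by omega)).trans (Hf_succ_lb Q' t)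
    · have : Q = Q' + 1 := by omega
      subst this; exact le_rfl

omit hα in
lemma Hf_nonneg (Q : ℕ) (t : ℝ) : 0 ≤ Hf α Q t := ff_nonneg _ _

lemma Hf_le_half (Q : ℕ) (t : ℝ) : Hf α Q t ≤ 1/2 - wf α Q := ff_le hα _ _

lemma Hf_mono_t (Q : ℕ) {u v : ℝ} (hu : 0 ≤ u) (huv : u ≤ v) (hv : v < 1) :
    Hf α Q u ≤ Hf α Q v := by
  unfold Hf
  have hmul : (2:ℝ)^Q * u ≤ (2:ℝ)^Q * v := by
    apply mul_le_mul_of_nonneg_left huv (by positivity)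
  have hfl : ⌊(2:ℝ)^Q * u⌋₊ ≤ ⌊(2:ℝ)^Q * v⌋₊ := Nat.floor_mono hmul
  have hlt : ⌊(2:ℝ)^Q * v⌋₊ < 2^Q := by
    rw [Nat.floor_lt (mul_nonneg (by positivity) (hu.trans huv))]
    push_cast
    nlinarith [pow_pos (show (0:ℝ) < 2 by norm_num) Q]
  exact (ff_gap hα Q _ _ hfl hlt).1

lemma hf_bddAbove (t : ℝ) : BddAbove (Set.range (fun Q => Hf α Q t)) := by
  refine ⟨1/2, ?_⟩
  rintro x ⟨Q, rfl⟩
  have h1 := ff_le hα (α := α) Q ⌊(2:ℝ)^Q * t⌋₊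
  have h2 := (wf_pos (α := α) Q).le
  show Hf α Q t ≤ 1/2
  unfold Hf
  linarith

lemma Hf_le_hf (Q : ℕ) (t : ℝ) : Hf α Q t ≤ hf α t :=
  le_ciSup (hf_bddAbove hα t) Q

omit hα in
lemma hf_le {t c : ℝ} (h : ∀ Q, Hf α Q t ≤ c) : hf α t ≤ c :=
  ciSup_le h

lemma hf_nonneg (t : ℝ) : 0 ≤ hf α t :=
  le_trans (Hf_nonneg 0 t) (le_ciSup (hf_bddAbove hα t) 0)

lemma hf_le_half (t : ℝ) : hf α t ≤ 1/2 := by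
  apply hf_le
  intro Q
  have h1 := ff_le hα (α := α) Q ⌊(2:ℝ)^Q * t⌋₊
  have h2 := (wf_pos (α := α) Q).le
  show Hf α Q t ≤ 1/2
  unfold Hf
  linarith

lemma hf_mono {u v : ℝ} (hu : 0 ≤ u) (huv : u ≤ v) (hv : v < 1) : hf α u ≤ hf α v := by
  apply hf_le
  intro Q
  exact (Hf_mono_t hα Q hu huv hv).trans (Hf_le_hf hα Q v)

omit hα in
lemma Hf_dyadic (P Q m : ℕ) : Hf α (P + Q) ((m:ℝ)/2^P) = ff α P m := by
  have hfl : ⌊(2:ℝ)^(P+Q) * ((m:ℝ)/2^P)⌋₊ = m * 2^Q := by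
    have : (2:ℝ)^(P+Q) * ((m:ℝ)/2^P) = ((m * 2^Q : ℕ) : ℝ) := by
      rw [pow_add]
      push_cast
      field_simp
    rw [this, Nat.floor_natCast]
  unfold Hf
  rw [hfl, ff_dyadic]

lemma hf_dyadic (P m : ℕ) : hf α ((m:ℝ)/2^P) = ff α P m := by
  apply le_antisymm
  · apply hf_le
    intro Q
    rcases le_or_gt Q P with h | h
    · calc Hf α Q ((m:ℝ)/2^P) ≤ Hf α P ((m:ℝ)/2^P) := Hf_mono_Q h _
        _ = ff α P m := by simpa using Hf_dyadic P 0 m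
    · have : Hf α Q ((m:ℝ)/2^P) = Hf α (P + (Q - P)) ((m:ℝ)/2^P) := by
        congr 1
        omega
      rw [this, Hf_dyadic]
  · calc ff α P m = Hf α P ((m:ℝ)/2^P) := by simpa using (Hf_dyadic P 0 m).symm
      _ ≤ hf α ((m:ℝ)/2^P) := le_ciSup (hf_bddAbove hα _) P


/-- Key expansion estimate. -/
lemma key {u v : ℝ} (hu : 0 ≤ u) (hv : v ≤ 1/2) {P : ℕ} (hP : 1 ≤ P)
    (hgap : u + 2 * ((2:ℝ)^P)⁻¹ ≤ v) : hf α u + wf α P ≤ hf α v := by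
  have hpow : (0:ℝ) < 2^P := by positivity
  have hinv : (0:ℝ) < ((2:ℝ)^P)⁻¹ := by positivity
  have hinv1 : ((2:ℝ)^P)⁻¹ * 2^P = 1 := inv_mul_cancel₀ (ne_of_gt hpow)
  have huv : u ≤ v := by nlinarith
  set m := ⌊(2:ℝ)^P * u⌋₊ with hm
  have hmle : (m:ℝ) ≤ 2^P * u := Nat.floor_le (by positivity)
  have hmlt : (2:ℝ)^P * u < m + 1 := Nat.lt_floor_add_one _
  set d : ℝ := ((m+1 : ℕ):ℝ)/2^P with hd
  set d' : ℝ := ((m+2 : ℕ):ℝ)/2^P with hd'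
  have hud : u ≤ d := by
    rw [hd, le_div_iff₀ hpow]
    push_cast
    nlinarith
  have hd'v : d' ≤ v := by
    rw [hd', div_le_iff₀ hpow]
    push_cast
    nlinarith
  have hm2 : ((m:ℝ) + 2) < 2^P := by
    have h2P : (2:ℝ) ≤ 2^P := by
      calc (2:ℝ) = 2^1 := (pow_one 2).symm
      _ ≤ 2^P := pow_le_pow_right₀ one_le_two hP
    rw [hd', div_le_iff₀ hpow] at hd'v
    push_cast at hd'v
    nlinarith
  have hm2n : m + 2 < 2^P := by
    have := hm2
    have hcast : ((m + 2 : ℕ):ℝ) < ((2^P : ℕ):ℝ) := by push_cast; linarith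
    exact_mod_cast hcast
  have hd1 : d < 1 := by
    rw [hd, div_lt_one hpow]
    push_cast
    linarith
  have h1 : hf α u ≤ hf α d := hf_mono hα hu hud hd1
  have h2 : hf α d = ff α P (m+1) := hf_dyadic hα P (m+1)
  have h3 : hf α d' = ff α P (m+2) := hf_dyadic hα P (m+2)
  have h4 : ff α P (m+1) + wf α P ≤ ff α P (m+2) :=
    (ff_gap hα P (m+1) (m+2) (by omega) hm2n).2 (by omega)
  have h5 : hf α d' ≤ hf α v := by
    apply hf_mono hα ?_ hd'v (by linarith)
    rw [hd']
    positivity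
  rw [h2] at h1
  rw [h3] at h5
  linarith

set_option maxHeartbeats 1000000 in
/-- The inverse Hölder estimate. -/
lemma hold {u v : ℝ} (hu : 0 ≤ u) (hv : v ≤ 1/2) (huv : u ≤ v) :
    v - u ≤ 8 * (hf α v - hf α u) ^ α := by
  have hα0 := hα.1
  have hα1 := hα.2
  rcases eq_or_lt_of_le huv with heq | hlt
  · subst heq
    rw [sub_self, sub_self, Real.zero_rpow (ne_of_gt hα0)]
    simp
  set r := v - u with hr
  have hr0 : 0 < r := by simp [hr]; linarith
  have hrhalf : r ≤ 1/2 := by simp [hr]; linarith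
  have hex : ∃ n : ℕ, ((2:ℝ)^n)⁻¹ ≤ r/2 := by
    obtain ⟨n, hn⟩ := exists_pow_lt_of_lt_one (by linarith : (0:ℝ) < r/2)
      (by norm_num : (1:ℝ)/2 < 1)
    refine ⟨n, le_of_lt ?_⟩
    calc ((2:ℝ)^n)⁻¹ = ((1:ℝ)/2)^n := by rw [one_div, inv_pow]
    _ < r/2 := hn
  set P := Nat.find hex with hPdef
  have hP : ((2:ℝ)^P)⁻¹ ≤ r/2 := Nat.find_spec hex
  have hP1 : 1 ≤ P := by
    rcases Nat.eq_zero_or_pos P with h0 | h0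
    · exfalso
      rw [h0] at hP
      norm_num at hP
      linarith
    · exact h0
  have hPmin : r/2 < ((2:ℝ)^(P-1))⁻¹ := by
    have := Nat.find_min hex (m := P - 1) (by omega)
    linarith [not_le.mp this]
  have hr4 : r/4 < ((2:ℝ)^P)⁻¹ := by
    have hsplit : (2:ℝ)^P = 2 * 2^(P-1) := by
      rw [← pow_succ']
      congr 1
      omega
    rw [hsplit, mul_inv]
    have h2 : (0:ℝ) < (2:ℝ)^(P-1) := by positivity
    calc r/4 = (r/2)/2 := by ring
    _ < ((2:ℝ)^(P-1))⁻¹ / 2 := by linarith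
    _ = 2⁻¹ * ((2:ℝ)^(P-1))⁻¹ := by ring
  have hkey : hf α u + wf α P ≤ hf α v := by
    apply key hα hu hv hP1
    have : 2 * ((2:ℝ)^P)⁻¹ ≤ r := by linarith
    linarith [this]
  set s := hf α v - hf α u with hs
  have hs1 : wf α P ≤ s := by simp [hs]; linarith
  -- lower bound wf α P ≥ (1/2) * (r/4)^(1/α)
  have hσ := σf_density hα P
  have hwf : wf α P = (2:ℝ) ^ (-(σf α P : ℝ)) := by
    rw [Real.rpow_neg (by norm_num), Real.rpow_natCast]
    rfl
  have hexp : -(σf α P : ℝ) ≥ -((P:ℝ))/α - 1 := by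
    rw [ge_iff_le, div_sub' (ne_of_gt hα0), div_le_iff₀ hα0]
    ring_nf
    nlinarith
  have hwf_ge : wf α P ≥ (2:ℝ) ^ (-((P:ℝ))/α - 1) := by
    rw [hwf]
    exact Real.rpow_le_rpow_of_exponent_le one_le_two hexp
  have hsplit2 : (2:ℝ) ^ (-((P:ℝ))/α - 1) = (1/2) * ((2:ℝ)^(-(P:ℝ)))^(1/α) := by
    rw [← Real.rpow_mul (by norm_num : (0:ℝ) ≤ 2)]
    rw [Real.rpow_sub (by norm_num : (0:ℝ) < 2)]
    rw [Real.rpow_one]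
    rw [show -(P:ℝ) * (1/α) = -(P:ℝ)/α by ring]
    ring
  have h2P : ((2:ℝ)^P)⁻¹ = (2:ℝ)^(-(P:ℝ)) := by
    rw [Real.rpow_neg (by norm_num), Real.rpow_natCast]
  have hmono : ((r/4) : ℝ)^((1:ℝ)/α) ≤ ((2:ℝ)^(-(P:ℝ)))^((1:ℝ)/α) := by
    apply Real.rpow_le_rpow (by linarith) ?_ (by positivity)
    rw [← h2P]
    linarith
  have hs2 : (1/2) * (r/4)^((1:ℝ)/α) ≤ s := by
    calc (1/2) * (r/4)^((1:ℝ)/α) ≤ (1/2) * ((2:ℝ)^(-(P:ℝ)))^((1:ℝ)/α) := by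
          nlinarith [hmono]
    _ = (2:ℝ) ^ (-((P:ℝ))/α - 1) := hsplit2.symm
    _ ≤ wf α P := hwf_ge
    _ ≤ s := hs1
  -- now raise to power α
  have hbase_pos : (0:ℝ) < (1/2) * (r/4)^((1:ℝ)/α) := by positivity
  have hfinal : ((1/2) * (r/4)^((1:ℝ)/α)) ^ α ≤ s ^ α :=
    Real.rpow_le_rpow (le_of_lt hbase_pos) hs2 (le_of_lt hα0)
  have hcomp : ((1/2) * (r/4)^((1:ℝ)/α)) ^ α = (1/2:ℝ)^α * (r/4) := by
    rw [Real.mul_rpow (by norm_num) (by positivity)]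
    congr 1
    rw [← Real.rpow_mul (by linarith)]
    rw [show (1/α) * α = 1 by field_simp]
    exact Real.rpow_one _
  have hhalf : (1/2:ℝ) ≤ (1/2:ℝ)^α := by
    calc (1/2:ℝ) = (1/2:ℝ)^(1:ℝ) := (Real.rpow_one _).symm
    _ ≤ (1/2:ℝ)^α := by
        apply Real.rpow_le_rpow_of_exponent_ge (by norm_num) (by norm_num) (le_of_lt hα1)
  have hsα : r/8 ≤ s^α := by
    have : (1/2:ℝ)^α * (r/4) ≥ (1/2) * (r/4) := by nlinarith
    rw [hcomp] at hfinal
    nlinarith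
  linarith


lemma tail_ub (t : ℝ) (j : ℕ) :
    hf α t ≤ Hf α (pseq α j) t + ((2:ℝ)^(gf α (nseq α j)))⁻¹ := by
  set p := pseq α j with hp
  set g := gf α (nseq α j) with hg
  have hwfp1 : wf α (p+1) = ((2:ℝ)^(g+1))⁻¹ := by
    unfold wf
    rw [σf_pseq_succ hα]
  have hhalf : ((2:ℝ)^(g+1))⁻¹ * 2 = ((2:ℝ)^g)⁻¹ := by
    rw [pow_succ]
    field_simp
  have aux : ∀ k, Hf α (p + 1 + k) t ≤ Hf α p t + ((2:ℝ)^g)⁻¹ - wf α (p + 1 + k) := by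
    intro k
    induction k with
    | zero =>
      have h1 := Hf_succ_ub (α := α) p t
      rw [Nat.add_zero, hwfp1]
      linarith
    | succ k ih =>
      have e : p + 1 + (k + 1) = (p + 1 + k) + 1 := rfl
      rw [e]
      have h1 := Hf_succ_ub (α := α) (p+1+k) t
      have h2 := wf_two_mul_succ_le hα (p+1+k)
      linarith
  apply hf_le
  intro Q
  rcases le_or_gt Q p with h | h
  · have := Hf_mono_Q (α := α) h t
    have hpos : (0:ℝ) < ((2:ℝ)^g)⁻¹ := by positivity
    linarith
  · have e : Q = p + 1 + (Q - (p+1)) := by omega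
    rw [e]
    have := aux (Q - (p+1))
    have hpos := wf_pos (α := α) (p + 1 + (Q - (p+1)))
    linarith

lemma head_dyadic (t : ℝ) (j : ℕ) :
    ∃ k : ℕ, Hf α (pseq α j) t = (k:ℝ) / 2^(nseq α j) := by
  obtain ⟨k, hk⟩ := ff_int hα (pseq α j) ⌊(2:ℝ)^(pseq α j) * t⌋₊
  refine ⟨k, ?_⟩
  rw [← σf_pseq hα j]
  exact hk

omit hα in
lemma Nseq_pos (j : ℕ) : 0 < Nseq α j := Nat.pow_pos (by norm_num)

lemma Nseq_strictMono : StrictMono (Nseq α) := by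
  have hn : StrictMono (nseq α) := strictMono_nat_of_lt_succ (fun j => by
    have := nseq_succ_ge hα j; omega)
  intro a b hab
  exact Nat.pow_lt_pow_right (by norm_num) (by have := hn hab; omega)


omit hα in
-- distance on the circle between two close reals
lemma circle_dist_le {x y : ℝ} (h : |x - y| ≤ 1) :
    dist ((x : ℝ) : Circle2) ((y : ℝ) : Circle2) ≤ |x - y| := by
  rw [dist_eq_norm, ← AddCircle.coe_sub]
  rw [(AddCircle.norm_coe_eq_abs_iff (2:ℝ) (by norm_num)).2 (by rw [abs_two]; linarith)]

lemma mem_Etilde (t : ℝ) : ((hf α t : ℝ) : Circle2) ∈ Etilde (Nseq α) (1 - α) := by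
  refine ⟨1, fun j => ?_⟩
  set x := hf α t with hx
  set n := nseq α j with hn
  set g := gf α (nseq α j) with hg
  obtain ⟨k, hk⟩ := head_dyadic hα t j
  set head := Hf α (pseq α j) t with hhead
  -- head is in the grid
  have hNcast : ((Nseq α j : ℕ) : ℝ) = (2:ℝ)^(n+1) := by
    show ((2^(n+1) : ℕ) : ℝ) = _
    push_cast
    ring
  have hmem : ((head : ℝ) : Circle2) ∈ grid (Nseq α j) := by
    refine ⟨(k : ℤ), ?_⟩
    show ((2 * (k:ℝ) / (Nseq α j : ℝ) : ℝ) : Circle2) = _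
    congr 1
    rw [hNcast, hk, pow_succ]
    field_simp
    ring
  -- distance bound
  have h1 : head ≤ x := Hf_le_hf hα _ t
  have h2 : x ≤ head + ((2:ℝ)^g)⁻¹ := tail_ub hα t j
  have hginv : ((2:ℝ)^g)⁻¹ ≤ 1 := by
    rw [inv_le_one_iff₀]
    right
    exact one_le_pow₀ one_le_two
  have habs : |x - head| ≤ ((2:ℝ)^g)⁻¹ := by
    rw [abs_le]
    constructor <;> [linarith [(by positivity : (0:ℝ) < ((2:ℝ)^g)⁻¹)]; linarith]
  have hdist : Metric.infDist ((x : ℝ) : Circle2) (grid (Nseq α j)) ≤ ((2:ℝ)^g)⁻¹ := by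
    calc Metric.infDist ((x : ℝ) : Circle2) (grid (Nseq α j))
        ≤ dist ((x : ℝ) : Circle2) ((head : ℝ) : Circle2) :=
          Metric.infDist_le_dist_of_mem hmem
    _ ≤ |x - head| := circle_dist_le (le_trans habs hginv)
    _ ≤ ((2:ℝ)^g)⁻¹ := habs
  -- the power computation
  have hA : (Nseq α j : ℝ) ^ ((1:ℝ) + (1 - α)) = (2:ℝ) ^ (((n:ℝ)+1) * (2 - α)) := by
    rw [hNcast]
    rw [show ((2:ℝ)^(n+1)) = (2:ℝ)^(((n+1):ℕ):ℝ) by rw [Real.rpow_natCast]]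
    rw [← Real.rpow_mul (by norm_num : (0:ℝ) ≤ 2)]
    congr 1
    push_cast
    ring
  have hApos : (0:ℝ) ≤ (2:ℝ) ^ (((n:ℝ)+1) * (2 - α)) := le_of_lt (Real.rpow_pos_of_pos two_pos _)
  have hinfnn : 0 ≤ Metric.infDist ((x : ℝ) : Circle2) (grid (Nseq α j)) :=
    Metric.infDist_nonneg
  rw [hA]
  calc (2:ℝ) ^ (((n:ℝ)+1) * (2 - α)) * Metric.infDist ((x : ℝ) : Circle2) (grid (Nseq α j))
      ≤ (2:ℝ) ^ (((n:ℝ)+1) * (2 - α)) * ((2:ℝ)^g)⁻¹ := by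
        exact mul_le_mul_of_nonneg_left hdist hApos
  _ = (2:ℝ) ^ (((n:ℝ)+1) * (2 - α)) * (2:ℝ) ^ (-(g:ℝ)) := by
        rw [Real.rpow_neg (by norm_num : (0:ℝ) ≤ 2), Real.rpow_natCast]
  _ = (2:ℝ) ^ (((n:ℝ)+1) * (2 - α) - (g:ℝ)) := by
        rw [← Real.rpow_add two_pos]
        ring_nf
  _ ≤ 1 := by
        apply Real.rpow_le_one_of_one_le_of_nonpos one_le_two
        have hceil : ((n:ℝ)+1) * (2 - α) ≤ (g:ℝ) := by
          have h := Nat.le_ceil ((2 - α) * ((n:ℝ)+1))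
          rw [hg]
          unfold gf
          rw [hn] at *
          nlinarith [h]
        linarith


/-- main set on the real line -/
def Dset : Set ℝ := Icc 0 (1/2)

lemma hf_injOn : Set.InjOn (hf α) (Dset) := by
  intro u hu v hv hvals
  rcases le_total u v with h | h
  · have := hold hα hu.1 hv.2 h
    rw [hvals, sub_self, Real.zero_rpow (ne_of_gt hα.1)] at this
    simp at this
    linarith
  · have := hold hα hv.1 hu.2 h
    rw [hvals, sub_self, Real.zero_rpow (ne_of_gt hα.1)] at this
    simp at this
    linarith

lemma holder_bound {u v : ℝ} (hu : u ∈ Dset) (hv : v ∈ Dset) :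
    |u - v| ≤ 8 * |hf α u - hf α v| ^ α := by
  rcases le_total u v with h | h
  · have h1 := hold hα hu.1 hv.2 h
    have h2 : hf α u ≤ hf α v := hf_mono hα hu.1 h (by have := hv.2; linarith)
    rw [abs_sub_comm, abs_of_nonneg (by linarith), abs_sub_comm, abs_of_nonneg (by linarith)]
    linarith
  · have h1 := hold hα hv.1 hu.2 h
    have h2 : hf α v ≤ hf α u := hf_mono hα hv.1 h (by have := hu.2; linarith)
    rw [abs_of_nonneg (by linarith), abs_of_nonneg (by linarith)]
    linarith

lemma holder_invFun :
    HolderOnWith 8 (Real.toNNReal α) (Function.invFunOn (hf α) (Dset)) (hf α '' Dset) := by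
  have hcoe : ((Real.toNNReal α : ℝ≥0) : ℝ) = α := Real.coe_toNNReal α hα.1.le
  intro x hx y hy
  obtain ⟨u, hu, rfl⟩ := hx
  obtain ⟨v, hv, rfl⟩ := hy
  have hgu : Function.invFunOn (hf α) Dset (hf α u) = u :=
    (hf_injOn hα).leftInvOn_invFunOn hu
  have hgv : Function.invFunOn (hf α) Dset (hf α v) = v :=
    (hf_injOn hα).leftInvOn_invFunOn hv
  rw [hgu, hgv]
  have hb := holder_bound hα hu hv
  have hdnn : (0:ℝ) ≤ dist (hf α u) (hf α v) := dist_nonneg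
  calc edist u v = ENNReal.ofReal (dist u v) := edist_dist u v
  _ ≤ ENNReal.ofReal (8 * dist (hf α u) (hf α v) ^ α) := by
      apply ENNReal.ofReal_le_ofReal
      rw [Real.dist_eq, Real.dist_eq]
      exact hb
  _ = ENNReal.ofReal 8 * ENNReal.ofReal (dist (hf α u) (hf α v) ^ α) := by
      rw [ENNReal.ofReal_mul (by norm_num)]
  _ = (8 : ℝ≥0) * ENNReal.ofReal (dist (hf α u) (hf α v)) ^ ((Real.toNNReal α : ℝ≥0) : ℝ) := by
      rw [hcoe, ENNReal.ofReal_rpow_of_nonneg hdnn hα.1.le]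
      norm_num
  _ = (8 : ℝ≥0) * edist (hf α u) (hf α v) ^ ((Real.toNNReal α : ℝ≥0) : ℝ) := by
      rw [edist_dist]

lemma dimH_E_ge : ENNReal.ofReal α ≤ dimH (hf α '' Dset) := by
  have hr0 : (0:ℝ≥0) < Real.toNNReal α := by
    rw [← NNReal.coe_lt_coe, Real.coe_toNNReal α hα.1.le]
    exact hα.1
  have hle := (holder_invFun hα).dimH_image_le hr0
  have himg : Function.invFunOn (hf α) Dset '' (hf α '' Dset) = Dset :=
    (hf_injOn hα).invFunOn_image Subset.rfl
  rw [himg] at hle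
  have hD : dimH (Dset) = 1 := by
    rw [Real.dimH_of_nonempty_interior (by
      rw [show Dset = Icc 0 (1/2) from rfl, interior_Icc]
      exact ⟨1/4, by norm_num, by norm_num⟩)]
    simp
  rw [hD] at hle
  have hfin : ((Real.toNNReal α : ℝ≥0) : ℝ≥0∞) ≤ dimH (hf α '' Dset) := by
    rw [ENNReal.le_div_iff_mul_le (Or.inl ?h1) (Or.inl ?h2)] at hle
    · rw [one_mul] at hle
      exact hle
    case h1 =>
      simp only [ne_eq, ENNReal.coe_eq_zero]
      rw [Real.toNNReal_eq_zero]
      push_neg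
      exact hα.1
    case h2 => exact ENNReal.coe_ne_top
  exact hfin

theorem main : ∃ N : ℕ → ℕ, StrictMono N ∧ (∀ j, 0 < N j) ∧
    ENNReal.ofReal α ≤ dimH (Etilde N (1 - α)) := by
  refine ⟨Nseq α, Nseq_strictMono hα, Nseq_pos, ?_⟩
  set E : Set ℝ := hf α '' Dset with hE
  have hsub : E ⊆ Icc 0 (1/2) := by
    rintro x ⟨t, _, rfl⟩
    exact ⟨hf_nonneg hα t, hf_le_half hα t⟩
  -- the isometric copy inside the circle
  have hiso : Isometry (fun x : E => ((x : ℝ) : Circle2)) := by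
    apply Isometry.of_dist_eq
    intro x y
    have hx := hsub x.2
    have hy := hsub y.2
    have habs : |(x:ℝ) - (y:ℝ)| ≤ 1 := by
      rw [abs_le]
      constructor
      · have := hx.1; have := hy.2; linarith
      · have := hx.2; have := hy.1; linarith
    have h1 : dist ((x:ℝ) : Circle2) ((y:ℝ) : Circle2) = |(x:ℝ) - (y:ℝ)| := by
      rw [dist_eq_norm, ← AddCircle.coe_sub]
      exact (AddCircle.norm_coe_eq_abs_iff (2:ℝ) (by norm_num)).2 (by rw [abs_two]; linarith)
    rw [h1, Subtype.dist_eq, Real.dist_eq]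
  have hrange : Set.range (fun x : E => ((x : ℝ) : Circle2))
      = (fun x : ℝ => ((x : ℝ) : Circle2)) '' E := by
    rw [show (fun x : E => ((x : ℝ) : Circle2))
        = (fun x : ℝ => ((x : ℝ) : Circle2)) ∘ (Subtype.val) from rfl]
    rw [Set.range_comp, Subtype.range_coe]
  have hdim1 : dimH ((fun x : ℝ => ((x : ℝ) : Circle2)) '' E) = dimH E := by
    calc dimH ((fun x : ℝ => ((x : ℝ) : Circle2)) '' E)
        = dimH ((fun x : E => ((x : ℝ) : Circle2)) '' Set.univ) := by
          rw [Set.image_univ, hrange]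
    _ = dimH (Set.univ : Set E) := hiso.dimH_image _
    _ = dimH (((↑) : E → ℝ) '' Set.univ) := (isometry_subtype_coe.dimH_image _).symm
    _ = dimH E := by rw [Subtype.coe_image_univ]
  have hsubset : (fun x : ℝ => ((x : ℝ) : Circle2)) '' E ⊆ Etilde (Nseq α) (1 - α) := by
    rintro _ ⟨x, ⟨t, _, rfl⟩, rfl⟩
    exact mem_Etilde hα t
  calc ENNReal.ofReal α ≤ dimH E := dimH_E_ge hα
  _ = dimH ((fun x : ℝ => ((x : ℝ) : Circle2)) '' E) := hdim1.symm
  _ ≤ dimH (Etilde (Nseq α) (1 - α)) := dimH_mono hsubset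

end EtProof

/-- For every `α ∈ (0,1)`, with `δ = 1 - α`, there is a strictly increasing sequence of
positive integers `(N_j)` such that `dim_H Ẽ ≥ α`. -/
theorem exists_seq_dimH_Etilde_ge (α : ℝ) (hα : α ∈ Set.Ioo (0 : ℝ) 1) :
    ∃ N : ℕ → ℕ, StrictMono N ∧ (∀ j, 0 < N j) ∧
      ENNReal.ofReal α ≤ dimH (Etilde N (1 - α)) := by
  exact EtProof.main hα


end
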